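/- Let F : (0, ∞) → ℝ be nondecreasing with 0 ≤ F(x) ≤ 1 for all x. Assume there exist constants C, y₀ > 0 and r > 0 such that F(x) ≤ F(C x y^{−2})² + C ( y² F(y)⁴ + y^r + 2 F(C x)² ) for all x > 0 and all y ∈ (0, y₀), and assume there exist C₀, x₀, α₀ > 0 such that F(x) ≤ C₀ x^{α₀} for all x ∈ (0, x₀]. Then for every γ ∈ (0, r/4) there exist C₁, x₁ > 0 such that F(x) ≤ C₁ x^{γ} for all x ∈ (0, x₁]. In particular, if r > 12, then F(x) ≤ C₁ x^{3+ε} near 0 for some ε > 0. -/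
import Mathlib

open Real Set

private lemma rpow_inv_cancel {t e : ℝ} (ht0 : 0 ≤ t) (he : e ≠ 0) : (t ^ e⁻¹) ^ e = t := by
  rw [← Real.rpow_mul ht0, inv_mul_cancel₀ he, Real.rpow_one]

set_option maxHeartbeats 1000000 in
lemma bootstrap_step
    (F : ℝ → ℝ)
    (hF01 : ∀ x : ℝ, 0 < x → F x ∈ Set.Icc (0 : ℝ) 1)
    (C y₀ r : ℝ) (hC : 0 < C) (hy₀ : 0 < y₀) (hr : 0 < r)
    (hrec : ∀ x : ℝ, 0 < x → ∀ y ∈ Set.Ioo (0 : ℝ) y₀,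
      F x ≤ F (C * x * y⁻¹ ^ 2) ^ 2 + C * (y ^ 2 * F y ^ 4 + y ^ r + 2 * F (C * x) ^ 2))
    (γ αs : ℝ) (hγ0 : 0 < γ) (hγr : 4 * γ < r) (hαs : 0 < αs)
    (α K a : ℝ) (hα1 : αs ≤ α) (hα2 : α ≤ γ) (hK : 0 ≤ K)
    (ha : 0 < a) (ha1 : a ≤ 1)
    (hb : ∀ x ∈ Set.Ioc (0:ℝ) a, F x ≤ K * x ^ α) :
    ∃ K' a', 0 ≤ K' ∧ 0 < a' ∧ a' ≤ 1 ∧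
      ∀ x ∈ Set.Ioc (0:ℝ) a',
        F x ≤ K' * x ^ (min γ (α + αs * min 2 (r - 4*γ) / (2 + 8*γ))) := by
  have hα0 : 0 < α := lt_of_lt_of_le hαs hα1
  set c := min 2 (r - 4*γ) with hc_def
  have hc0 : 0 < c := lt_min two_pos (by linarith)
  have hc2 : c ≤ 2 := min_le_left _ _
  have hcr : c ≤ r - 4*γ := min_le_right _ _
  set δ := αs * c / (2 + 8*γ) with hδ_def
  have hδ0 : 0 < δ := by positivity
  set m := min (2 + 4*α) r with hm_def
  have hm0 : 0 < m := lt_min (by linarith) hr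
  have hm1 : m ≤ 2 + 4*α := min_le_left _ _
  have hm2 : m ≤ r := min_le_right _ _
  have hmc : 4*α + c ≤ m := by
    apply le_min <;> nlinarith
  have hden : 0 < m + 4*α := by linarith
  set β := 2*α/(m + 4*α) with hβ_def
  have hβ0 : 0 < β := by positivity
  have h2β : 2*β < 1 := by
    have h4 : 2*β = 4*α/(m+4*α) := by rw [hβ_def]; ring
    rw [h4, div_lt_one hden]; linarith
  have h12β : 0 < 1 - 2*β := by linarith
  set e := 2*α*m/(m+4*α) with he_def
  have hβm : β * m = e := by rw [hβ_def, he_def]; ring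
  have he1 : 2*α*(1-2*β) = e := by
    rw [hβ_def, he_def]; field_simp; ring
  have he2 : e ≤ β*(2+4*α) := by
    rw [← hβm]; exact mul_le_mul_of_nonneg_left hm1 hβ0.le
  have he3 : e ≤ β*r := by
    rw [← hβm]; exact mul_le_mul_of_nonneg_left hm2 hβ0.le
  have he4 : e ≤ 2*α := by
    rw [he_def, div_le_iff₀ hden]; nlinarith
  have heαδ : α + δ ≤ e := by
    have key : α + α*(m-4*α)/(m+4*α) = e := by
      rw [he_def]; field_simp; ring
    have hdiv : δ ≤ α*(m-4*α)/(m+4*α) := by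
      rw [hδ_def]
      apply div_le_div₀ (by nlinarith) (by nlinarith) hden (by linarith)
    linarith
  set s := min γ (α + δ) with hs_def
  have hs0 : 0 < s := lt_min hγ0 (by linarith)
  have hse : s ≤ e := le_trans (min_le_right _ _) heαδ
  set M := max C 1 with hM_def
  have hM1 : 1 ≤ M := le_max_right _ _
  have hCM : C ≤ M := le_max_left _ _
  have hM0 : 0 < M := by linarith
  set t := min 1 (y₀/2) with ht_def
  have ht0 : 0 < t := lt_min one_pos (by linarith)
  have ht1 : t ≤ 1 := min_le_left _ _
  have haM0 : 0 < a/M := by positivity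
  have haM1 : a/M ≤ 1 := by rw [div_le_one hM0]; linarith
  refine ⟨(K * C ^ α) ^ 2 + C * (K^4 + 1 + 2 * (K * C ^ α) ^ 2),
    min (t ^ β⁻¹) (min ((a/M) ^ (1-2*β)⁻¹) (min (a ^ β⁻¹) (a/M))), by positivity, by positivity,
    ?_, ?_⟩
  · exact le_trans (min_le_left _ _) (Real.rpow_le_one ht0.le ht1 (by positivity))
  intro x hx
  obtain ⟨hx0, hxa'⟩ := hx
  have hx_t : x ≤ t ^ β⁻¹ := hxa'.trans (min_le_left _ _)
  have hx_2 : x ≤ (a/M) ^ (1-2*β)⁻¹ := hxa'.trans ((min_le_right _ _).trans (min_le_left _ _))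
  have hx_3 : x ≤ a ^ β⁻¹ :=
    hxa'.trans ((min_le_right _ _).trans ((min_le_right _ _).trans (min_le_left _ _)))
  have hx_4 : x ≤ a/M :=
    hxa'.trans ((min_le_right _ _).trans ((min_le_right _ _).trans (min_le_right _ _)))
  have hx1 : x ≤ 1 := le_trans hx_4 haM1
  have hxs : ∀ w : ℝ, s ≤ w → x ^ w ≤ x ^ s := fun w hw =>
    Real.rpow_le_rpow_of_exponent_ge hx0 hx1 hw
  have hp2 : ∀ w : ℝ, (x ^ w) ^ (2:ℕ) = x ^ (w*2) := fun w => by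
    rw [← Real.rpow_natCast (x ^ w) 2, ← Real.rpow_mul hx0.le]; norm_num
  have hp4 : ∀ w : ℝ, (x ^ w) ^ (4:ℕ) = x ^ (w*4) := fun w => by
    rw [← Real.rpow_natCast (x ^ w) 4, ← Real.rpow_mul hx0.le]; norm_num
  -- bounds on the relevant points
  have hxβt : x ^ β ≤ t := by
    calc x ^ β ≤ (t ^ β⁻¹) ^ β := Real.rpow_le_rpow hx0.le hx_t hβ0.le
    _ = t := rpow_inv_cancel ht0.le (ne_of_gt hβ0)
  have hxβa : x ^ β ≤ a := by
    calc x ^ β ≤ (a ^ β⁻¹) ^ β := Real.rpow_le_rpow hx0.le hx_3 hβ0.le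
    _ = a := rpow_inv_cancel ha.le (ne_of_gt hβ0)
  have hx2a : x ^ (1-2*β) ≤ a/M := by
    calc x ^ (1-2*β) ≤ ((a/M) ^ (1-2*β)⁻¹) ^ (1-2*β) :=
          Real.rpow_le_rpow hx0.le hx_2 h12β.le
    _ = a/M := rpow_inv_cancel haM0.le (ne_of_gt h12β)
  have hy0 : 0 < x ^ β := Real.rpow_pos_of_pos hx0 β
  have hyy₀ : x ^ β < y₀ := lt_of_le_of_lt (hxβt.trans (min_le_right _ _)) (by linarith)
  have hmain := hrec x hx0 (x ^ β) ⟨hy0, hyy₀⟩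
  -- rewrite first argument
  have hA : C * x * ((x ^ β)⁻¹) ^ 2 = C * x ^ (1-2*β) := by
    have h1 : ((x ^ β)⁻¹) ^ (2:ℕ) = x ^ (-β*2) := by
      rw [← Real.rpow_neg hx0.le, hp2]
    have h2 : x ^ (1 - 2*β) = x * x ^ (-β*2) := by
      rw [show (1 - 2*β) = 1 + -β*2 by ring, Real.rpow_add hx0, Real.rpow_one]
    rw [h1, h2]; ring
  rw [hA] at hmain
  -- bound term 1
  have hArg0 : 0 < C * x ^ (1-2*β) := by positivity
  have hArga : C * x ^ (1-2*β) ≤ a := by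
    calc C * x ^ (1-2*β) ≤ M * (a/M) :=
          mul_le_mul hCM hx2a (by positivity) hM0.le
    _ = a := mul_div_cancel₀ a (ne_of_gt hM0)
  have hFA : F (C * x ^ (1-2*β)) ≤ K * C ^ α * x ^ ((1-2*β)*α) := by
    have := hb _ ⟨hArg0, hArga⟩
    calc F (C * x ^ (1-2*β)) ≤ K * (C * x ^ (1-2*β)) ^ α := this
    _ = K * C ^ α * x ^ ((1-2*β)*α) := by
        rw [Real.mul_rpow hC.le (by positivity), ← Real.rpow_mul hx0.le]; ring
  have hT1 : F (C * x ^ (1-2*β)) ^ 2 ≤ (K * C ^ α) ^ 2 * x ^ s := by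
    have hF0 := (hF01 _ hArg0).1
    calc F (C * x ^ (1-2*β)) ^ 2 ≤ (K * C ^ α * x ^ ((1-2*β)*α)) ^ 2 :=
          pow_le_pow_left₀ hF0 hFA 2
    _ = (K * C ^ α) ^ 2 * x ^ ((1-2*β)*α*2) := by rw [mul_pow, hp2]
    _ ≤ (K * C ^ α) ^ 2 * x ^ s := by
        apply mul_le_mul_of_nonneg_left _ (by positivity)
        apply hxs
        have hq : (1-2*β)*α*2 = 2*α*(1-2*β) := by ring
        linarith [he1]
  -- bound term 2
  have hFy : F (x ^ β) ≤ K * x ^ (β*α) := by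
    have := hb _ ⟨hy0, hxβa⟩
    calc F (x ^ β) ≤ K * (x ^ β) ^ α := this
    _ = K * x ^ (β*α) := by rw [← Real.rpow_mul hx0.le]
  have hT2 : (x ^ β) ^ 2 * F (x ^ β) ^ 4 ≤ K^4 * x ^ s := by
    have hF0 := (hF01 _ hy0).1
    calc (x ^ β) ^ 2 * F (x ^ β) ^ 4 ≤ (x ^ β) ^ 2 * (K * x ^ (β*α)) ^ 4 := by
          apply mul_le_mul_of_nonneg_left (pow_le_pow_left₀ hF0 hFy 4) (by positivity)
    _ = K^4 * (x ^ (β*2) * x ^ (β*α*4)) := by rw [mul_pow, hp2, hp4]; ring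
    _ = K^4 * x ^ (β*2 + β*α*4) := by rw [← Real.rpow_add hx0]
    _ ≤ K^4 * x ^ s := by
        apply mul_le_mul_of_nonneg_left _ (by positivity)
        apply hxs
        have hq : β*2 + β*α*4 = β*(2+4*α) := by ring
        linarith [he2]
  -- bound term 3
  have hT3 : (x ^ β) ^ r ≤ x ^ s := by
    rw [← Real.rpow_mul hx0.le]
    exact hxs _ (le_trans hse he3)
  -- bound term 4
  have hCx0 : 0 < C * x := by positivity
  have hCxa : C * x ≤ a := by
    calc C * x ≤ M * (a/M) := mul_le_mul hCM hx_4 hx0.le hM0.le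
    _ = a := mul_div_cancel₀ a (ne_of_gt hM0)
  have hFCx : F (C * x) ≤ K * C ^ α * x ^ α := by
    have := hb _ ⟨hCx0, hCxa⟩
    calc F (C * x) ≤ K * (C * x) ^ α := this
    _ = K * C ^ α * x ^ α := by rw [Real.mul_rpow hC.le hx0.le]; ring
  have hT4 : F (C * x) ^ 2 ≤ (K * C ^ α) ^ 2 * x ^ s := by
    have hF0 := (hF01 _ hCx0).1
    calc F (C * x) ^ 2 ≤ (K * C ^ α * x ^ α) ^ 2 := pow_le_pow_left₀ hF0 hFCx 2
    _ = (K * C ^ α) ^ 2 * x ^ (α*2) := by rw [mul_pow, hp2]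
    _ ≤ (K * C ^ α) ^ 2 * x ^ s := by
        apply mul_le_mul_of_nonneg_left _ (by positivity)
        apply hxs
        linarith [he4]
  have hxs0 : 0 ≤ x ^ s := (Real.rpow_pos_of_pos hx0 s).le
  calc F x ≤ F (C * x ^ (1-2*β)) ^ 2 + C * ((x ^ β) ^ 2 * F (x ^ β) ^ 4 + (x ^ β) ^ r
        + 2 * F (C * x) ^ 2) := hmain
  _ ≤ (K * C ^ α) ^ 2 * x ^ s + C * (K^4 * x ^ s + x ^ s + 2 * ((K * C ^ α) ^ 2 * x ^ s)) := by
      have h2' : 2 * F (C * x) ^ 2 ≤ 2 * ((K * C ^ α) ^ 2 * x ^ s) := by linarith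
      have := add_le_add (add_le_add hT2 hT3) h2'
      have := mul_le_mul_of_nonneg_left this hC.le
      linarith [hT1]
  _ = ((K * C ^ α) ^ 2 + C * (K^4 + 1 + 2 * (K * C ^ α) ^ 2)) * x ^ s := by ring

/-- Bootstrap for branching number `K = 2`: if a nondecreasing
`F : (0,∞) → [0,1]` satisfies the two-step inequality
`F(x) ≤ F(Cx y⁻²)² + C (y² F(y)⁴ + y^r + 2 F(Cx)²)` together with an a-priori power bound
`F(x) ≤ C₀ x^{α₀}` near `0`, then for every `γ < r/4` one has `F(x) ≤ C₁ x^γ` near `0`;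
in particular, for `r > 12`, `F(x) ≤ C₁ x^{3+ε}` near `0` for some `ε > 0`. -/
theorem bootstrap_power_law_K_eq_two
    (F : ℝ → ℝ)
    (hmono : ∀ x y : ℝ, 0 < x → x ≤ y → F x ≤ F y)
    (hF01 : ∀ x : ℝ, 0 < x → F x ∈ Set.Icc (0 : ℝ) 1)
    (C y₀ r : ℝ) (hC : 0 < C) (hy₀ : 0 < y₀) (hr : 0 < r)
    (hrec : ∀ x : ℝ, 0 < x → ∀ y ∈ Set.Ioo (0 : ℝ) y₀,
      F x ≤ F (C * x * y⁻¹ ^ 2) ^ 2 + C * (y ^ 2 * F y ^ 4 + y ^ r + 2 * F (C * x) ^ 2))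
    (C₀ x₀ α₀ : ℝ) (hC₀ : 0 < C₀) (hx₀ : 0 < x₀) (hα₀ : 0 < α₀)
    (hapriori : ∀ x ∈ Set.Ioc (0 : ℝ) x₀, F x ≤ C₀ * x ^ α₀) :
    (∀ γ ∈ Set.Ioo (0 : ℝ) (r / 4), ∃ C₁ : ℝ, 0 < C₁ ∧ ∃ x₁ : ℝ, 0 < x₁ ∧
        ∀ x ∈ Set.Ioc (0 : ℝ) x₁, F x ≤ C₁ * x ^ γ) ∧
      (12 < r → ∃ ε : ℝ, 0 < ε ∧ ∃ C₁ : ℝ, 0 < C₁ ∧ ∃ x₁ : ℝ, 0 < x₁ ∧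
        ∀ x ∈ Set.Ioc (0 : ℝ) x₁, F x ≤ C₁ * x ^ (3 + ε)) := by
  have main : ∀ γ ∈ Set.Ioo (0:ℝ) (r/4), ∃ C₁ : ℝ, 0 < C₁ ∧ ∃ x₁ : ℝ, 0 < x₁ ∧
      ∀ x ∈ Set.Ioc (0:ℝ) x₁, F x ≤ C₁ * x ^ γ := by
    intro γ hγ
    obtain ⟨hγ0, hγ4⟩ := hγ
    have hγr : 4*γ < r := by linarith
    set αs := min γ α₀ with hαs_def
    have hαs0 : 0 < αs := lt_min hγ0 hα₀
    have hαsγ : αs ≤ γ := min_le_left _ _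
    set δ := αs * min 2 (r - 4*γ) / (2 + 8*γ) with hδ_def
    have hδ0 : 0 < δ := by
      have h1 : 0 < min 2 (r-4*γ) := lt_min two_pos (by linarith)
      positivity
    have chain : ∀ n : ℕ, ∃ K a : ℝ, 0 ≤ K ∧ 0 < a ∧ a ≤ 1 ∧
        ∀ x ∈ Set.Ioc (0:ℝ) a, F x ≤ K * x ^ (min γ (αs + (n:ℝ) * δ)) := by
      intro n
      induction n with
      | zero =>
        refine ⟨C₀, min x₀ 1, hC₀.le, lt_min hx₀ one_pos, min_le_right _ _, ?_⟩
        rintro x ⟨hx0, hxa⟩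
        have hx1 : x ≤ 1 := hxa.trans (min_le_right _ _)
        have hap := hapriori x ⟨hx0, hxa.trans (min_le_left _ _)⟩
        have hmin : min γ (αs + ((0:ℕ):ℝ) * δ) ≤ α₀ := by
          push_cast
          rw [zero_mul, add_zero]
          exact (min_le_right _ _).trans (min_le_right _ _)
        calc F x ≤ C₀ * x ^ α₀ := hap
        _ ≤ C₀ * x ^ (min γ (αs + ((0:ℕ):ℝ) * δ)) :=
            mul_le_mul_of_nonneg_left
              (Real.rpow_le_rpow_of_exponent_ge hx0 hx1 hmin) hC₀.le
      | succ n ih =>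
        obtain ⟨K, a, hK, ha, ha1, hb⟩ := ih
        by_cases hcase : γ ≤ αs + (n:ℝ) * δ
        · refine ⟨K, a, hK, ha, ha1, ?_⟩
          intro x hx
          have h1 : min γ (αs + ((n:ℕ):ℝ) * δ) = γ := min_eq_left hcase
          have h2 : min γ (αs + ((n+1:ℕ):ℝ) * δ) = γ := by
            apply min_eq_left
            push_cast
            nlinarith
          rw [h2]; rw [h1] at hb
          exact hb x hx
        · push_neg at hcase
          have hmineq : min γ (αs + (n:ℝ) * δ) = αs + (n:ℝ) * δ := min_eq_right hcase.le
          rw [hmineq] at hb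
          obtain ⟨K', a', hK', ha', ha'1, hb'⟩ :=
            bootstrap_step F hF01 C y₀ r hC hy₀ hr hrec γ αs hγ0 hγr hαs0
              (αs + (n:ℝ) * δ) K a (le_add_of_nonneg_right (by positivity)) hcase.le
              hK ha ha1 hb
          refine ⟨K', a', hK', ha', ha'1, ?_⟩
          intro x hx
          have heq : min γ (αs + (n:ℝ) * δ + αs * min 2 (r - 4*γ) / (2 + 8*γ))
              = min γ (αs + ((n+1:ℕ):ℝ) * δ) := by
            congr 1
            push_cast
            rw [hδ_def]
            ring
          rw [← heq]
          exact hb' x hx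
    obtain ⟨n, hn⟩ := exists_nat_ge ((γ - αs)/δ)
    obtain ⟨K, a, hK, ha, ha1, hb⟩ := chain n
    have hγn : γ ≤ αs + (n:ℝ) * δ := by
      rw [div_le_iff₀ hδ0] at hn; linarith
    refine ⟨K + 1, by linarith, a, ha, ?_⟩
    intro x hx
    have hbx := hb x hx
    rw [min_eq_left hγn] at hbx
    nlinarith [Real.rpow_pos_of_pos hx.1 γ]
  refine ⟨main, fun h12 => ?_⟩
  refine ⟨(r-12)/8, by linarith, ?_⟩
  exact main (3 + (r-12)/8) ⟨by linarith, by linarith⟩
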